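/- With notation as follows: for i = n,…,m, the functions μ_i on the open set of tuples (φ_1,…,φ_n) ∈ ((ℝ^m)^*)^n where the upper-left (n−1)×(n−1) minor μ is nonzero, defined as the determinant of the n×n matrix formed by rows 1,…,n−1,i of the columns φ_1,…,φ_n. Then at any point of the common zero set {μ_n = … = μ_m = 0}, the Jacobian minor ∂(μ_n,…,μ_m)/∂(φ_n^n,…,φ_n^m) equals μ^{m−n+1} ≠ 0; in particular the differentials dμ_n,…,dμ_m are linearly independent there. -/

import Mathlib

/-- The `(n-1) × (n-1)` upper-left minor `μ` of the tuple of covectors `φ`. -/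
noncomputable def principalMinor (m n : ℕ) (hmn : n ≤ m) (φ : Fin n → Fin m → ℝ) : ℝ :=
  (Matrix.of fun i j : Fin (n - 1) =>
    φ (Fin.castLE (by omega) j) (Fin.castLE (by omega) i)).det

/-- The `n × n` minor `μ_i` formed by rows `1, …, n-1, i` of the columns `φ_1, …, φ_n`. -/
noncomputable def muMinor (m n : ℕ) (hmn : n ≤ m) (i : Fin m) (φ : Fin n → Fin m → ℝ) : ℝ :=
  (Matrix.of fun (k j : Fin n) =>
    φ j (if h : (k : ℕ) < n - 1 then (⟨k, by omega⟩ : Fin m) else i)).det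

open Finset in
lemma muMinor_fderiv {m n : ℕ} (hn : 1 ≤ n) (hmn : n ≤ m)
    (φ : Fin n → Fin m → ℝ) (i l : Fin m) (hi : n - 1 ≤ (i : ℕ)) (hl : n - 1 ≤ (l : ℕ)) :
    fderiv ℝ (muMinor m n hmn i) φ
      (Pi.single (⟨n - 1, by omega⟩ : Fin n) (Pi.single l (1 : ℝ))) =
      if i = l then principalMinor m n hmn φ else 0 := by
  classical
  set last : Fin n := ⟨n - 1, by omega⟩ with hlast
  set r : Fin n → Fin m := fun k => if h : (k : ℕ) < n - 1 then (⟨k, by omega⟩ : Fin m) else i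
    with hr
  -- the evaluation continuous linear map
  set ev : Fin n → Fin m → ((Fin n → Fin m → ℝ) →L[ℝ] ℝ) := fun j c =>
    (ContinuousLinearMap.proj c).comp (ContinuousLinearMap.proj (R := ℝ)
      (φ := fun _ : Fin n => Fin m → ℝ) j) with hev
  have hfun : muMinor m n hmn i = fun ψ : Fin n → Fin m → ℝ =>
      ∑ σ : Equiv.Perm (Fin n), ((Equiv.Perm.sign σ : ℤ) : ℝ) * ∏ x, ψ x (r (σ x)) := by
    funext ψ
    rw [muMinor, Matrix.det_apply']
    rfl
  set D : Equiv.Perm (Fin n) → ((Fin n → Fin m → ℝ) →L[ℝ] ℝ) := fun σ =>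
    ∑ x, (∏ j ∈ univ.erase x, φ j (r (σ j))) • ev x (r (σ x)) with hD
  have hprod : ∀ σ : Equiv.Perm (Fin n),
      HasFDerivAt (fun ψ : Fin n → Fin m → ℝ => ∏ x, ψ x (r (σ x))) (D σ) φ := by
    intro σ
    exact HasFDerivAt.finset_prod (fun x _ => (ev x (r (σ x))).hasFDerivAt)
  have hder : HasFDerivAt (muMinor m n hmn i)
      (∑ σ : Equiv.Perm (Fin n), ((Equiv.Perm.sign σ : ℤ) : ℝ) • D σ) φ := by
    rw [hfun]
    exact HasFDerivAt.fun_sum fun σ _ => (hprod σ).const_mul _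
  rw [hder.fderiv]
  set v : Fin n → Fin m → ℝ := Pi.single last (Pi.single l (1 : ℝ)) with hv
  have hvzero : ∀ x : Fin n, x ≠ last → v x = 0 := fun x hx => Pi.single_eq_of_ne hx _
  have hvlast : v last = Pi.single l 1 := Pi.single_eq_same _ _
  -- evaluate
  rw [ContinuousLinearMap.sum_apply]
  have hDv : ∀ σ : Equiv.Perm (Fin n),
      D σ v = (∏ j ∈ univ.erase last, φ j (r (σ j))) * ((Pi.single l (1:ℝ) : Fin m → ℝ) (r (σ last))) := by
    intro σ
    rw [hD]
    rw [ContinuousLinearMap.sum_apply]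
    rw [Finset.sum_eq_single_of_mem last (mem_univ _)]
    · simp [ev, hvlast, smul_eq_mul]
    · intro x _ hx
      simp [ev, hvzero x hx]
  simp only [ContinuousLinearMap.smul_apply, smul_eq_mul]
  simp_rw [hDv]
  have hrlast : r last = i := by simp [hr, hlast]
  have hsingle : ∀ σ : Equiv.Perm (Fin n),
      (Pi.single l (1:ℝ) : Fin m → ℝ) (r (σ last)) =
        if σ last = last then (if i = l then (1:ℝ) else 0) else 0 := by
    intro σ
    by_cases h : σ last = last
    · rw [h, if_pos rfl, hrlast, Pi.single_apply]
    · rw [if_neg h]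
      have hne : ((σ last : ℕ)) ≠ n - 1 := fun hc => h (Fin.ext hc)
      have hx : ((σ last : ℕ)) < n - 1 := by
        have := (σ last).isLt; omega
      have : r (σ last) = ⟨(σ last : ℕ), by omega⟩ := by simp [hr, hx]
      rw [this]
      apply Pi.single_eq_of_ne
      intro hc
      have hcv : ((σ last : ℕ)) = (l : ℕ) := congrArg Fin.val hc
      omega
  simp_rw [hsingle]
  by_cases hil : i = l
  · rw [if_pos hil]
    subst hil
    simp only [if_pos rfl]
    set B : Matrix (Fin n) (Fin n) ℝ := Matrix.of fun k j : Fin n =>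
      if j = last then (if k = last then (1:ℝ) else 0) else φ j (r k) with hB
    have hdetB : (∑ σ : Equiv.Perm (Fin n), ((Equiv.Perm.sign σ : ℤ) : ℝ) *
        ((∏ j ∈ univ.erase last, φ j (r (σ j))) * (if σ last = last then (1:ℝ) else 0)))
        = B.det := by
      rw [Matrix.det_apply']
      refine Finset.sum_congr rfl fun σ _ => ?_
      rw [← Finset.mul_prod_erase univ (fun x => B (σ x) x) (mem_univ last)]
      have h1 : B (σ last) last = if σ last = last then (1:ℝ) else 0 := by simp [hB]
      have h2 : ∏ x ∈ univ.erase last, B (σ x) x = ∏ x ∈ univ.erase last, φ x (r (σ x)) := by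
        refine Finset.prod_congr rfl fun x hx => ?_
        have hxne : x ≠ last := (Finset.mem_erase.mp hx).1
        simp [hB, hxne]
      rw [h1, h2, mul_comm (∏ x ∈ univ.erase last, φ x (r (σ x)))]
    rw [hdetB]
    -- block decomposition
    have hn1 : n - 1 + 1 = n := by omega
    set e : Fin (n-1) ⊕ Fin 1 ≃ Fin n := finSumFinEquiv.trans (finCongr hn1) with he
    have he1 : ∀ a : Fin (n-1), ((e (Sum.inl a) : ℕ)) = (a : ℕ) := by
      intro a; simp [he]
    have he2 : ∀ b : Fin 1, ((e (Sum.inr b) : ℕ)) = n - 1 := by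
      intro b; simp [he, Fin.ext_iff]
    rw [← Matrix.det_submatrix_equiv_self e B]
    have hblocks : B.submatrix e e = Matrix.fromBlocks
        (Matrix.of fun a j : Fin (n - 1) =>
          φ (Fin.castLE (by omega) j) (Fin.castLE (by omega) a)) 0
        (Matrix.of fun (b : Fin 1) (a : Fin (n-1)) => φ (Fin.castLE (by omega) a) i) 1 := by
      ext x y
      cases x with
      | inl a => cases y with
        | inl a' =>
            have hy : e (Sum.inl a') ≠ last := by
              intro hc
              have := he1 a'
              rw [hc] at this
              simp [hlast] at this
              omega
            have hx : ((e (Sum.inl a) : ℕ)) < n - 1 := by rw [he1]; exact a.isLt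
            simp only [Matrix.submatrix_apply, hB, Matrix.of_apply, if_neg hy,
              Matrix.fromBlocks_apply₁₁, Matrix.of_apply]
            rw [hr]
            simp only [hx, dif_pos]
            refine congrArg₂ φ (Fin.ext ?_) (Fin.ext ?_)
            · simpa using he1 a'
            · simpa using he1 a
        | inr b =>
            have hy : e (Sum.inr b) = last := Fin.ext (by rw [he2])
            have hx : e (Sum.inl a) ≠ last := by
              intro hc
              have := he1 a
              rw [hc] at this
              simp [hlast] at this
              omega
            simp [hB, hy, hx]
      | inr b => cases y with
        | inl a' =>
            have hy : e (Sum.inl a') ≠ last := by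
              intro hc
              have := he1 a'
              rw [hc] at this
              simp [hlast] at this
              omega
            have hx : ¬ ((e (Sum.inr b) : ℕ)) < n - 1 := by rw [he2]; omega
            simp only [Matrix.submatrix_apply, hB, Matrix.of_apply, if_neg hy,
              Matrix.fromBlocks_apply₂₁, Matrix.of_apply]
            rw [hr]
            simp only [hx, dif_neg, not_false_iff]
            exact congrArg₂ φ (Fin.ext (by simpa using he1 a')) rfl
        | inr b' =>
            have hy : e (Sum.inr b') = last := Fin.ext (by rw [he2])
            have hx : e (Sum.inr b) = last := Fin.ext (by rw [he2])
            have hbb : b = b' := Subsingleton.elim _ _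
            simp [hB, hy, hx, hbb, Matrix.one_apply]
    rw [hblocks, Matrix.det_fromBlocks_zero₁₂, Matrix.det_one, mul_one]
    rfl
  · rw [if_neg hil]
    simp only [if_neg hil]
    simp

theorem stmt5 {m n : ℕ} (hn : 1 ≤ n) (hmn : n ≤ m)
    (φ : Fin n → Fin m → ℝ)
    (hμ : principalMinor m n hmn φ ≠ 0)
    (hzero : ∀ i : Fin m, n - 1 ≤ (i : ℕ) → muMinor m n hmn i φ = 0)
    (J : Matrix {i : Fin m // n - 1 ≤ (i : ℕ)} {i : Fin m // n - 1 ≤ (i : ℕ)} ℝ)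
    (hJ : J = Matrix.of fun i l =>
      fderiv ℝ (muMinor m n hmn i.1) φ
        (Pi.single (⟨n - 1, by omega⟩ : Fin n) (Pi.single l.1 (1 : ℝ)))) :
    J.det = principalMinor m n hmn φ ^ (m - n + 1) ∧ J.det ≠ 0 ∧
      LinearIndependent ℝ
        (fun i : {i : Fin m // n - 1 ≤ (i : ℕ)} => fderiv ℝ (muMinor m n hmn i.1) φ) := by
  classical
  set μ := principalMinor m n hmn φ with hμdef
  have hJd : J = Matrix.diagonal (fun _ : {i : Fin m // n - 1 ≤ (i : ℕ)} => μ) := by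
    rw [hJ]
    ext i l
    rw [Matrix.of_apply, muMinor_fderiv hn hmn φ i.1 l.1 i.2 l.2, Matrix.diagonal_apply]
    by_cases h : i = l
    · subst h; simp [hμdef]
    · rw [if_neg (fun hc => h (Subtype.ext hc)), if_neg h]
  have hcard : Fintype.card {i : Fin m // n - 1 ≤ (i : ℕ)} = m - n + 1 := by
    rw [Fintype.card_subtype, Finset.card_filter,
      Fin.sum_univ_eq_sum_range (fun k => if n - 1 ≤ k then 1 else 0) m, ← Finset.card_filter]
    have : (Finset.range m).filter (fun k => n - 1 ≤ k) = Finset.Ico (n - 1) m := by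
      ext k
      simp only [Finset.mem_filter, Finset.mem_range, Finset.mem_Ico]
      omega
    rw [this, Nat.card_Ico]
    omega
  have hdet : J.det = μ ^ (m - n + 1) := by
    rw [hJd, Matrix.det_diagonal, Finset.prod_const, Finset.card_univ, hcard]
  refine ⟨hdet, by rw [hdet]; exact pow_ne_zero _ hμ, ?_⟩
  set lastv : Fin n := ⟨n - 1, by omega⟩ with hlastv
  set L : ((Fin n → Fin m → ℝ) →L[ℝ] ℝ) →ₗ[ℝ] ({i : Fin m // n - 1 ≤ (i : ℕ)} → ℝ) :=
    { toFun := fun f l => f (Pi.single lastv (Pi.single l.1 (1 : ℝ)))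
      map_add' := fun f g => by funext l; simp
      map_smul' := fun c f => by funext l; simp } with hL
  have hunit : IsUnit J := by
    rw [Matrix.isUnit_iff_isUnit_det, hdet]
    exact (pow_ne_zero _ hμ).isUnit
  have hrows : LinearIndependent ℝ (fun i => J i) :=
    Matrix.linearIndependent_rows_iff_isUnit.mpr hunit
  refine LinearIndependent.of_comp L ?_
  have hcomp : (⇑L ∘ fun i : {i : Fin m // n - 1 ≤ (i : ℕ)} =>
      fderiv ℝ (muMinor m n hmn i.1) φ) = fun i => J i := by
    funext i
    funext l
    rw [hJ]
    rfl
  rw [hcomp]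
  exact hrows
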